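/- Let J ≥ 2 and let α ∈ S^{J-1}. For each K ∈ ℕ let Z_K be a random vector in ℝ^J with α + Z_K ∈ S^{J-1} almost surely and let U_1, …, U_K be i.i.d. Uniform(0,1) random variables independent of Z_K. Fix 1 ≤ j ≤ J and define S_K = K^{-1/2}·Σ_{k=1}^K 1(U_k ∈ P_j(α + Z_K) \ P_j(α)). If K·E(‖Z_K‖²) → 0 as K → ∞ (where ‖·‖ is the Euclidean norm), then E(S_K) → 0 and Var(S_K) → 0, and consequently S_K converges to 0 in probability. -/

import Mathlib

open MeasureTheory ProbabilityTheory Filter Topology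

noncomputable section

/-- The `j`-th interval `P_j(h)` of the partition of `[0,1]` induced by `h ∈ S^{J-1}`:
`P_1(h) = [0, h_1]` and `P_j(h) = (h_1 + ⋯ + h_{j-1}, h_1 + ⋯ + h_j]` for `j ≥ 2`. -/
def Pint {J : ℕ} (h : Fin J → ℝ) (j : Fin J) : Set ℝ :=
  if j.val = 0 then Set.Icc 0 (∑ ℓ ∈ Finset.Iic j, h ℓ)
  else Set.Ioc (∑ ℓ ∈ Finset.Iio j, h ℓ) (∑ ℓ ∈ Finset.Iic j, h ℓ)

open Classical in
/-- The conditionally multinomial count vector `T_K`: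
`T_{Kj} = ∑_{k=1}^K 1(U_k ∈ P_j(Π))`. -/
def countVec {Ω : Type*} {J : ℕ} (K : ℕ) (U : ℕ → Ω → ℝ) (Pi : Ω → Fin J → ℝ)
    (ω : Ω) (j : Fin J) : ℝ :=
  ∑ k ∈ Finset.range K, if U k ω ∈ Pint (Pi ω) j then 1 else 0

/-- Convergence in distribution (weak convergence of the laws): the expectations of every
bounded continuous function converge. -/
def TendstoInDistr {Ω E : Type*} [MeasurableSpace Ω] [MeasurableSpace E] [TopologicalSpace E]
    (Pr : Measure Ω) (X : ℕ → Ω → E) (D : Measure E) : Prop :=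
  ∀ f : BoundedContinuousFunction E ℝ,
    Tendsto (fun K => ∫ ω, f (X K ω) ∂Pr) atTop (𝓝 (∫ x, f x ∂D))

/-- `D` is the centered multivariate normal distribution `N(0, S)`: every linear functional
`x ↦ tᵀx` pushes `D` forward to the real Gaussian with mean `0` and variance `tᵀSt`. -/
def IsCenteredGaussian {ι : Type*} [Fintype ι] (D : Measure (ι → ℝ)) (S : Matrix ι ι ℝ) : Prop :=
  IsProbabilityMeasure D ∧
    ∀ t : ι → ℝ, D.map (fun x => ∑ i, t i * x i) =
      gaussianReal 0 (Real.toNNReal (∑ i, ∑ i', t i * S i i' * t i'))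

lemma measure_Pint_diff_le {J : ℕ} (α z : Fin J → ℝ) (j : Fin J) :
    volume (Pint (fun i => α i + z i) j \ Pint α j)
      ≤ ENNReal.ofReal (|∑ ℓ ∈ Finset.Iio j, z ℓ| + |∑ ℓ ∈ Finset.Iic j, z ℓ|) := by
  set sa := ∑ ℓ ∈ Finset.Iio j, z ℓ with hsa
  set sb := ∑ ℓ ∈ Finset.Iic j, z ℓ with hsb
  set a := ∑ ℓ ∈ Finset.Iio j, α ℓ with ha
  set b := ∑ ℓ ∈ Finset.Iic j, α ℓ with hb
  have hsub : Pint (fun i => α i + z i) j \ Pint α j ⊆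
      Set.Ioc (a + sa) a ∪ Set.Ioc b (b + sb) := by
    intro u hu
    obtain ⟨h1, h2⟩ := hu
    simp only [Pint, Finset.sum_add_distrib, ← hsa, ← hsb, ← ha, ← hb] at h1 h2
    by_cases hj : j.val = 0
    · rw [if_pos hj] at h1 h2
      right
      rw [Set.mem_Icc] at h1 h2
      exact ⟨lt_of_not_ge fun hle => h2 ⟨h1.1, hle⟩, h1.2⟩
    · rw [if_neg hj] at h1 h2
      rw [Set.mem_Ioc] at h1 h2
      rcases not_and_or.mp h2 with h | h
      · left; exact ⟨h1.1, le_of_not_gt h⟩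
      · right; exact ⟨lt_of_not_ge h, h1.2⟩
  calc volume (Pint (fun i => α i + z i) j \ Pint α j)
      ≤ volume (Set.Ioc (a + sa) a ∪ Set.Ioc b (b + sb)) := measure_mono hsub
    _ ≤ volume (Set.Ioc (a + sa) a) + volume (Set.Ioc b (b + sb)) := measure_union_le _ _
    _ ≤ ENNReal.ofReal |sa| + ENNReal.ofReal |sb| := by
        rw [Real.volume_Ioc, Real.volume_Ioc]
        gcongr
        · have h : a - (a + sa) = -sa := by ring
          rw [h]; exact neg_le_abs sa
        · have h : b + sb - b = sb := by ring
          rw [h]; exact le_abs_self sb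
    _ = ENNReal.ofReal (|sa| + |sb|) := (ENNReal.ofReal_add (abs_nonneg _) (abs_nonneg _)).symm

lemma measurableSet_Pint {J : ℕ} (h : Fin J → ℝ) (j : Fin J) : MeasurableSet (Pint h j) := by
  unfold Pint; split_ifs
  · exact measurableSet_Icc
  · exact measurableSet_Ioc

lemma measurableSet_pairSet {J : ℕ} (α : Fin J → ℝ) (j : Fin J) :
    MeasurableSet {p : (Fin J → ℝ) × ℝ | p.2 ∈ Pint (fun i => α i + p.1 i) j \ Pint α j} := by
  have hsum : ∀ s : Finset (Fin J), Measurable (fun p : (Fin J → ℝ) × ℝ =>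
      ∑ ℓ ∈ s, (α ℓ + p.1 ℓ)) := by
    intro s
    exact Finset.measurable_sum _ fun ℓ _ =>
      measurable_const.add ((measurable_pi_apply ℓ).comp measurable_fst)
  have h1 : MeasurableSet {p : (Fin J → ℝ) × ℝ | p.2 ∈ Pint (fun i => α i + p.1 i) j} := by
    unfold Pint
    split_ifs
    · have h : {p : (Fin J → ℝ) × ℝ | p.2 ∈ Set.Icc 0 (∑ ℓ ∈ Finset.Iic j, (α ℓ + p.1 ℓ))}
          = {p : (Fin J → ℝ) × ℝ | (0:ℝ) ≤ p.2} ∩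
            {p | p.2 ≤ ∑ ℓ ∈ Finset.Iic j, (α ℓ + p.1 ℓ)} := by
        ext p; simp [Set.mem_Icc, Set.mem_setOf_eq]
      rw [h]
      exact (measurableSet_le measurable_const measurable_snd).inter
        (measurableSet_le measurable_snd (hsum _))
    · have h : {p : (Fin J → ℝ) × ℝ | p.2 ∈ Set.Ioc (∑ ℓ ∈ Finset.Iio j, (α ℓ + p.1 ℓ))
          (∑ ℓ ∈ Finset.Iic j, (α ℓ + p.1 ℓ))}
          = {p : (Fin J → ℝ) × ℝ | ∑ ℓ ∈ Finset.Iio j, (α ℓ + p.1 ℓ) < p.2} ∩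
            {p | p.2 ≤ ∑ ℓ ∈ Finset.Iic j, (α ℓ + p.1 ℓ)} := by
        ext p; simp [Set.mem_Ioc, Set.mem_setOf_eq]
      rw [h]
      exact (measurableSet_lt (hsum _) measurable_snd).inter
        (measurableSet_le measurable_snd (hsum _))
  have h2 : MeasurableSet {p : (Fin J → ℝ) × ℝ | p.2 ∈ Pint α j} :=
    measurable_snd (measurableSet_Pint α j)
  exact h1.inter h2.compl

lemma indep_pair_meas {Ω γ δ : Type*} [MeasurableSpace Ω] [MeasurableSpace γ] [MeasurableSpace δ]
    (Pr : Measure Ω) [IsProbabilityMeasure Pr] {X : Ω → γ} {Y : Ω → δ}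
    (hX : Measurable X) (hY : Measurable Y) (h : IndepFun X Y Pr)
    {s : Set (γ × δ)} (hs : MeasurableSet s) :
    Pr {ω | (X ω, Y ω) ∈ s} = ∫⁻ x, Pr.map Y (Prod.mk x ⁻¹' s) ∂(Pr.map X) := by
  have hmapY : IsProbabilityMeasure (Pr.map Y) := Measure.isProbabilityMeasure_map hY.aemeasurable
  have hmap := (indepFun_iff_map_prod_eq_prod_map_map hX.aemeasurable hY.aemeasurable).mp h
  have h0 : Pr {ω | (X ω, Y ω) ∈ s} = Pr.map (fun ω => (X ω, Y ω)) s := by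
    rw [Measure.map_apply (hX.prodMk hY) hs]; rfl
  rw [h0, hmap, Measure.prod_apply hs]

open Classical in
/-- If `K·E‖Z_K‖² → 0`, then for
`S_K = K^{-1/2}·Σ_{k=1}^K 1(U_k ∈ P_j(α + Z_K) \ P_j(α))` one has `E(S_K) → 0`,
`Var(S_K) → 0` and `S_K → 0` in probability. -/
theorem sdiff_indicator_sum_negligible
    {Ω : Type*} [MeasurableSpace Ω] (Pr : Measure Ω) [IsProbabilityMeasure Pr]
    (J : ℕ) (hJ : 2 ≤ J) (α : Fin J → ℝ) (hα : α ∈ stdSimplex ℝ (Fin J))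
    (j : Fin J)
    (Z : ℕ → Ω → Fin J → ℝ) (hZmeas : ∀ K, Measurable (Z K))
    (hZval : ∀ K, ∀ᵐ ω ∂Pr, (fun j' => α j' + Z K ω j') ∈ stdSimplex ℝ (Fin J))
    (U : ℕ → ℕ → Ω → ℝ) (hUmeas : ∀ K k, Measurable (U K k))
    (hUunif : ∀ K k, Pr.map (U K k) = volume.restrict (Set.Icc (0:ℝ) 1))
    (hUiid : ∀ K, iIndepFun (U K) Pr)
    (hUZindep : ∀ K, IndepFun (fun ω k => U K k ω) (Z K) Pr)
    (hZlim : Tendsto (fun K : ℕ => (K : ℝ) * ∫ ω, ∑ j', (Z K ω j') ^ 2 ∂Pr) atTop (𝓝 0)) :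
    Tendsto (fun K : ℕ =>
        ∫ ω, (∑ k ∈ Finset.range K,
          if U K k ω ∈ Pint (fun j' => α j' + Z K ω j') j \ Pint α j then (1:ℝ) else 0)
            / Real.sqrt K ∂Pr)
      atTop (𝓝 0) ∧
    Tendsto (fun K : ℕ =>
        variance (fun ω => (∑ k ∈ Finset.range K,
          if U K k ω ∈ Pint (fun j' => α j' + Z K ω j') j \ Pint α j then (1:ℝ) else 0)
            / Real.sqrt K) Pr)
      atTop (𝓝 0) ∧
    TendstoInMeasure Pr
      (fun K ω => (∑ k ∈ Finset.range K,
          if U K k ω ∈ Pint (fun j' => α j' + Z K ω j') j \ Pint α j then (1:ℝ) else 0)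
            / Real.sqrt K)
      atTop (fun _ => 0) := by
  -- notation
  set ν : Measure ℝ := volume.restrict (Set.Icc (0:ℝ) 1) with hνdef
  set len : (Fin J → ℝ) → ℝ :=
    fun z => |∑ ℓ ∈ Finset.Iio j, z ℓ| + |∑ ℓ ∈ Finset.Iic j, z ℓ| with hlendef
  set e : ℕ → ℝ := fun K => ∫ ω, ∑ j', (Z K ω j') ^ 2 ∂Pr with hedef
  set Bs : Set ((Fin J → ℝ) × ℝ) :=
    {p | p.2 ∈ Pint (fun i => α i + p.1 i) j \ Pint α j} with hBsdef
  set E : ℕ → ℕ → Set Ω := fun K k => (fun ω => (Z K ω, U K k ω)) ⁻¹' Bs with hEdef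
  set Y : ℕ → Ω → ℝ := fun K ω => ∑ j', (Z K ω j') ^ 2 with hYdef
  set X : ℕ → Ω → ℝ := fun K ω => Real.sqrt (Y K ω) with hXdef
  have hEmeas : ∀ K k, MeasurableSet (E K k) :=
    fun K k => ((hZmeas K).prodMk (hUmeas K k)) (measurableSet_pairSet α j)
  -- the indicator rewrite
  have hite : ∀ K k ω,
      (if U K k ω ∈ Pint (fun j' => α j' + Z K ω j') j \ Pint α j then (1:ℝ) else 0)
        = (E K k).indicator (1 : Ω → ℝ) ω := by
    intro K k ω
    by_cases h : U K k ω ∈ Pint (fun j' => α j' + Z K ω j') j \ Pint α j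
    · rw [if_pos h]; exact (Set.indicator_of_mem (show ω ∈ E K k from h) (1 : Ω → ℝ)).symm
    · rw [if_neg h]; exact (Set.indicator_of_notMem (show ω ∉ E K k from h) (1 : Ω → ℝ)).symm
  -- boundedness of Z
  have hZb : ∀ K, ∀ᵐ ω ∂Pr, ∀ j', |Z K ω j'| ≤ 1 := by
    intro K
    filter_upwards [hZval K] with ω hω
    intro j'
    have h1 : ∀ i, 0 ≤ α i + Z K ω i := hω.1
    have h2 : (∑ i, (α i + Z K ω i)) = 1 := hω.2
    have hle : α j' + Z K ω j' ≤ 1 := by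
      rw [← h2]
      exact Finset.single_le_sum (fun i _ => h1 i) (Finset.mem_univ j')
    have hα1 : 0 ≤ α j' := hα.1 j'
    have hα2 : α j' ≤ 1 := by
      rw [← hα.2]
      exact Finset.single_le_sum (fun i _ => hα.1 i) (Finset.mem_univ j')
    have := h1 j'
    rw [abs_le]; constructor <;> linarith
  have hYnonneg : ∀ K ω, 0 ≤ Y K ω := fun K ω => Finset.sum_nonneg fun i _ => sq_nonneg _
  have hYmeas : ∀ K, Measurable (Y K) := by
    intro K
    exact Finset.measurable_sum _ fun i _ =>
      (((measurable_pi_apply i).comp (hZmeas K)).pow_const 2)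
  have hYbdd : ∀ K, ∀ᵐ ω ∂Pr, Y K ω ≤ J := by
    intro K
    filter_upwards [hZb K] with ω hω
    calc Y K ω ≤ ∑ _j' : Fin J, (1:ℝ) := by
          apply Finset.sum_le_sum
          intro i _
          have := hω i
          nlinarith [abs_nonneg (Z K ω i), sq_abs (Z K ω i)]
      _ = J := by simp
  have hYint : ∀ K, Integrable (Y K) Pr := by
    intro K
    refine (MemLp.of_bound ((hYmeas K).aestronglyMeasurable) (J:ℝ) ?_).integrable le_rfl
    filter_upwards [hYbdd K, ae_of_all Pr (hYnonneg K)] with ω h1 h2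
    rw [Real.norm_eq_abs, abs_of_nonneg h2]; exact h1
  have hXmeas : ∀ K, Measurable (X K) := fun K => (hYmeas K).sqrt
  have hX2 : ∀ K, MemLp (X K) 2 Pr := by
    intro K
    refine MemLp.of_bound ((hXmeas K).aestronglyMeasurable) (Real.sqrt J) ?_
    filter_upwards [hYbdd K] with ω h1
    rw [Real.norm_eq_abs, abs_of_nonneg (Real.sqrt_nonneg _)]
    exact Real.sqrt_le_sqrt h1
  have hXint : ∀ K, Integrable (X K) Pr := fun K => (hX2 K).integrable one_le_two
  have hXnonneg : ∀ K ω, 0 ≤ X K ω := fun K ω => Real.sqrt_nonneg _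
  have he_nonneg : ∀ K, 0 ≤ e K :=
    fun K => integral_nonneg fun ω => hYnonneg K ω
  -- (∫ X)² ≤ e K
  have hEX : ∀ K, ∫ ω, X K ω ∂Pr ≤ Real.sqrt (e K) := by
    intro K
    rw [Real.le_sqrt (integral_nonneg (hXnonneg K)) (he_nonneg K)]
    have hvar := variance_nonneg (X K) Pr
    rw [variance_eq_sub (hX2 K)] at hvar
    have hXsq : ∫ ω, (X K ^ 2) ω ∂Pr = e K := by
      apply integral_congr_ae
      apply ae_of_all
      intro ω
      simp only [Pi.pow_apply, hXdef]
      exact Real.sq_sqrt (hYnonneg K ω)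
    rw [hXsq] at hvar
    linarith
  -- pointwise bound on len
  have hsJ : (0:ℝ) ≤ Real.sqrt J := Real.sqrt_nonneg _
  have hlen_le : ∀ z : Fin J → ℝ, len z ≤ 2 * Real.sqrt J * Real.sqrt (∑ j', z j' ^ 2) := by
    intro z
    have habs : ∀ s : Finset (Fin J),
        |∑ ℓ ∈ s, z ℓ| ≤ Real.sqrt J * Real.sqrt (∑ j', z j' ^ 2) := by
      intro s
      have h1 : (∑ ℓ ∈ s, z ℓ) ^ 2 ≤ (s.card : ℝ) * ∑ ℓ ∈ s, (z ℓ)^2 :=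
        sq_sum_le_card_mul_sum_sq
      have h2 : (∑ ℓ ∈ s, (z ℓ)^2) ≤ ∑ j', z j' ^ 2 := by
        apply Finset.sum_le_sum_of_subset_of_nonneg (Finset.subset_univ s)
        intro i _ _; exact sq_nonneg _
      have h3 : (s.card : ℝ) ≤ J := by
        have := Finset.card_le_card (Finset.subset_univ s)
        simp only [Finset.card_univ, Fintype.card_fin] at this
        exact_mod_cast this
      have h4 : (∑ ℓ ∈ s, z ℓ) ^ 2 ≤ (J : ℝ) * ∑ j', z j' ^ 2 := by
        calc (∑ ℓ ∈ s, z ℓ) ^ 2 ≤ (s.card : ℝ) * ∑ ℓ ∈ s, (z ℓ)^2 := h1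
          _ ≤ (J : ℝ) * ∑ j', z j' ^ 2 := by
              apply mul_le_mul h3 h2 (Finset.sum_nonneg fun i _ => sq_nonneg _)
                (Nat.cast_nonneg J)
      have h5 : |∑ ℓ ∈ s, z ℓ| = Real.sqrt ((∑ ℓ ∈ s, z ℓ)^2) :=
        (Real.sqrt_sq_eq_abs _).symm
      rw [h5]
      calc Real.sqrt ((∑ ℓ ∈ s, z ℓ)^2) ≤ Real.sqrt ((J:ℝ) * ∑ j', z j' ^ 2) :=
            Real.sqrt_le_sqrt h4
        _ = Real.sqrt J * Real.sqrt (∑ j', z j' ^ 2) := Real.sqrt_mul (Nat.cast_nonneg J) _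
    calc len z ≤ Real.sqrt J * Real.sqrt (∑ j', z j' ^ 2)
          + Real.sqrt J * Real.sqrt (∑ j', z j' ^ 2) := add_le_add (habs _) (habs _)
      _ = 2 * Real.sqrt J * Real.sqrt (∑ j', z j' ^ 2) := by ring
  have hlen_nonneg : ∀ z, 0 ≤ len z := fun z => add_nonneg (abs_nonneg _) (abs_nonneg _)
  have hlensq : ∀ z : Fin J → ℝ, len z * len z ≤ 4 * (J:ℝ) * (∑ j', z j' ^ 2) := by
    intro z
    set W := ∑ j', z j' ^ 2 with hW
    have hWnn : 0 ≤ W := Finset.sum_nonneg fun i _ => sq_nonneg _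
    have h1 := hlen_le z
    have hs1 : Real.sqrt (J:ℝ) ^ 2 = (J:ℝ) := Real.sq_sqrt (Nat.cast_nonneg J)
    have hs2 : Real.sqrt W ^ 2 = W := Real.sq_sqrt hWnn
    have h2 : (2 * Real.sqrt J * Real.sqrt W) * (2 * Real.sqrt J * Real.sqrt W)
        = 4 * (J:ℝ) * W := by nlinarith [Real.sqrt_nonneg (J:ℝ), Real.sqrt_nonneg W]
    calc len z * len z ≤ (2 * Real.sqrt J * Real.sqrt W) * (2 * Real.sqrt J * Real.sqrt W) :=
          mul_le_mul h1 h1 (hlen_nonneg z) (by positivity)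
      _ = 4 * (J:ℝ) * W := h2
  have hlenmeas : Measurable len := by
    apply Measurable.add
    · exact (Finset.measurable_sum _ fun ℓ _ => measurable_pi_apply ℓ).abs
    · exact (Finset.measurable_sum _ fun ℓ _ => measurable_pi_apply ℓ).abs
  have hβint : ∀ K, Integrable (fun ω => 2 * Real.sqrt J * X K ω) Pr :=
    fun K => (hXint K).const_mul _
  have hb1 : ∀ K k, Pr (E K k) ≤ ENNReal.ofReal (∫ ω, 2 * Real.sqrt J * X K ω ∂Pr) := by
    intro K k
    have hindep : IndepFun (Z K) (U K k) Pr :=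
      (hUZindep K).symm.comp measurable_id (measurable_pi_apply k)
    have key := indep_pair_meas Pr (hZmeas K) (hUmeas K k) hindep (measurableSet_pairSet α j)
    rw [hUunif K k] at key
    have hE : Pr (E K k) = ∫⁻ z, ν (Prod.mk z ⁻¹' Bs) ∂(Pr.map (Z K)) := key
    rw [hE]
    have step1 : ∫⁻ z, ν (Prod.mk z ⁻¹' Bs) ∂(Pr.map (Z K))
        ≤ ∫⁻ z, ENNReal.ofReal (len z) ∂(Pr.map (Z K)) := by
      apply lintegral_mono
      intro z
      refine le_trans (Measure.le_iff'.mp Measure.restrict_le_self _) ?_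
      exact measure_Pint_diff_le α z j
    have step2 : ∫⁻ z, ENNReal.ofReal (len z) ∂(Pr.map (Z K))
        = ∫⁻ ω, ENNReal.ofReal (len (Z K ω)) ∂Pr :=
      lintegral_map (ENNReal.measurable_ofReal.comp hlenmeas) (hZmeas K)
    have step3 : ∫⁻ ω, ENNReal.ofReal (len (Z K ω)) ∂Pr
        ≤ ∫⁻ ω, ENNReal.ofReal (2 * Real.sqrt J * X K ω) ∂Pr :=
      lintegral_mono fun ω => ENNReal.ofReal_le_ofReal (hlen_le (Z K ω))
    have step4 : ∫⁻ ω, ENNReal.ofReal (2 * Real.sqrt J * X K ω) ∂Pr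
        = ENNReal.ofReal (∫ ω, 2 * Real.sqrt J * X K ω ∂Pr) :=
      (ofReal_integral_eq_lintegral_ofReal (hβint K)
        (ae_of_all _ fun ω => by positivity)).symm
    calc ∫⁻ z, ν (Prod.mk z ⁻¹' Bs) ∂(Pr.map (Z K))
        ≤ ∫⁻ z, ENNReal.ofReal (len z) ∂(Pr.map (Z K)) := step1
      _ = ∫⁻ ω, ENNReal.ofReal (len (Z K ω)) ∂Pr := step2
      _ ≤ ∫⁻ ω, ENNReal.ofReal (2 * Real.sqrt J * X K ω) ∂Pr := step3
      _ = ENNReal.ofReal (∫ ω, 2 * Real.sqrt J * X K ω ∂Pr) := step4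
  have hb2v : ∀ K k k', k ≠ k' → Pr (E K k ∩ E K k')
      ≤ ENNReal.ofReal (∫ ω, 4 * (J:ℝ) * Y K ω ∂Pr) := by
    intro K k k' hkk'
    have hindep : IndepFun (Z K) (fun ω => (U K k ω, U K k' ω)) Pr :=
      (hUZindep K).symm.comp measurable_id
        ((measurable_pi_apply k).prodMk (measurable_pi_apply k'))
    have hs2m : MeasurableSet {p : (Fin J → ℝ) × (ℝ × ℝ) |
        (p.1, p.2.1) ∈ Bs ∧ (p.1, p.2.2) ∈ Bs} := by
      have hm1 : Measurable (fun p : (Fin J → ℝ) × (ℝ × ℝ) => (p.1, p.2.1)) :=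
        measurable_fst.prodMk (measurable_fst.comp measurable_snd)
      have hm2 : Measurable (fun p : (Fin J → ℝ) × (ℝ × ℝ) => (p.1, p.2.2)) :=
        measurable_fst.prodMk (measurable_snd.comp measurable_snd)
      exact (hm1 (measurableSet_pairSet α j)).inter (hm2 (measurableSet_pairSet α j))
    have key := indep_pair_meas Pr (hZmeas K) ((hUmeas K k).prodMk (hUmeas K k')) hindep hs2m
    have hpair : Pr.map (fun ω => (U K k ω, U K k' ω)) = ν.prod ν := by
      have h := (hUiid K).indepFun hkk'
      rw [indepFun_iff_map_prod_eq_prod_map_map (hUmeas K k).aemeasurable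
        (hUmeas K k').aemeasurable] at h
      rw [h, hUunif, hUunif]
    rw [hpair] at key
    have hEE : Pr (E K k ∩ E K k') = ∫⁻ z, (ν.prod ν) (Prod.mk z ⁻¹' {p : (Fin J → ℝ) × (ℝ × ℝ) |
        (p.1, p.2.1) ∈ Bs ∧ (p.1, p.2.2) ∈ Bs}) ∂(Pr.map (Z K)) := key
    rw [hEE]
    have hsect : ∀ z : Fin J → ℝ, (ν.prod ν) (Prod.mk z ⁻¹' {p : (Fin J → ℝ) × (ℝ × ℝ) |
        (p.1, p.2.1) ∈ Bs ∧ (p.1, p.2.2) ∈ Bs})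
        = ν (Pint (fun i => α i + z i) j \ Pint α j)
          * ν (Pint (fun i => α i + z i) j \ Pint α j) := by
      intro z
      have hss : Prod.mk z ⁻¹' {p : (Fin J → ℝ) × (ℝ × ℝ) |
          (p.1, p.2.1) ∈ Bs ∧ (p.1, p.2.2) ∈ Bs}
          = (Pint (fun i => α i + z i) j \ Pint α j)
            ×ˢ (Pint (fun i => α i + z i) j \ Pint α j) := rfl
      rw [hss, Measure.prod_prod]
    have hb : ∀ z : Fin J → ℝ, ν (Pint (fun i => α i + z i) j \ Pint α j)
        ≤ ENNReal.ofReal (len z) := by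
      intro z
      refine le_trans (Measure.le_iff'.mp Measure.restrict_le_self _) ?_
      exact measure_Pint_diff_le α z j
    calc ∫⁻ z, (ν.prod ν) (Prod.mk z ⁻¹' {p : (Fin J → ℝ) × (ℝ × ℝ) |
          (p.1, p.2.1) ∈ Bs ∧ (p.1, p.2.2) ∈ Bs}) ∂(Pr.map (Z K))
        = ∫⁻ z, ν (Pint (fun i => α i + z i) j \ Pint α j)
            * ν (Pint (fun i => α i + z i) j \ Pint α j) ∂(Pr.map (Z K)) :=
          lintegral_congr hsect
      _ ≤ ∫⁻ z, ENNReal.ofReal (4 * (J:ℝ) * (∑ j', z j' ^ 2)) ∂(Pr.map (Z K)) := by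
          apply lintegral_mono
          intro z
          calc ν (Pint (fun i => α i + z i) j \ Pint α j)
              * ν (Pint (fun i => α i + z i) j \ Pint α j)
              ≤ ENNReal.ofReal (len z) * ENNReal.ofReal (len z) :=
                mul_le_mul' (hb z) (hb z)
            _ = ENNReal.ofReal (len z * len z) := (ENNReal.ofReal_mul (hlen_nonneg z)).symm
            _ ≤ ENNReal.ofReal (4 * (J:ℝ) * (∑ j', z j' ^ 2)) :=
                ENNReal.ofReal_le_ofReal (hlensq z)
      _ = ∫⁻ ω, ENNReal.ofReal (4 * (J:ℝ) * Y K ω) ∂Pr := by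
          refine lintegral_map ?_ (hZmeas K)
          exact ENNReal.measurable_ofReal.comp
            ((Finset.measurable_sum _ fun i _ =>
              (measurable_pi_apply i).pow_const 2).const_mul _)
      _ = ENNReal.ofReal (∫ ω, 4 * (J:ℝ) * Y K ω ∂Pr) :=
          (ofReal_integral_eq_lintegral_ofReal ((hYint K).const_mul _)
            (ae_of_all _ fun ω => by positivity)).symm
  -- real-valued bounds
  set b1 : ℕ → ℝ := fun K => ∫ ω, 2 * Real.sqrt J * X K ω ∂Pr with hb1def
  set b2 : ℕ → ℝ := fun K => ∫ ω, 4 * (J:ℝ) * Y K ω ∂Pr with hb2def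
  have hb1_nonneg : ∀ K, 0 ≤ b1 K :=
    fun K => integral_nonneg fun ω => by positivity
  have hb2_nonneg : ∀ K, 0 ≤ b2 K :=
    fun K => integral_nonneg fun ω => by positivity
  have hb1_le : ∀ K, b1 K ≤ 2 * Real.sqrt J * Real.sqrt (e K) := by
    intro K
    have h1 : b1 K = 2 * Real.sqrt J * ∫ ω, X K ω ∂Pr := integral_const_mul _ _
    rw [h1]
    exact mul_le_mul_of_nonneg_left (hEX K) (by positivity)
  have hb2_eq : ∀ K, b2 K = 4 * (J:ℝ) * e K := by
    intro K
    have h1 : b2 K = 4 * (J:ℝ) * ∫ ω, Y K ω ∂Pr := integral_const_mul _ _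
    rw [h1]
  -- indicator-sum form
  have hfun_eq : ∀ K : ℕ,
      (fun ω => (∑ k ∈ Finset.range K,
        if U K k ω ∈ Pint (fun j' => α j' + Z K ω j') j \ Pint α j then (1:ℝ) else 0)
          / Real.sqrt K)
      = (fun ω => (∑ k ∈ Finset.range K, (E K k).indicator (1 : Ω → ℝ) ω) / Real.sqrt K) := by
    intro K
    funext ω
    rw [Finset.sum_congr rfl fun k _ => hite K k ω]
  have hind_int : ∀ K k, Integrable ((E K k).indicator (1 : Ω → ℝ)) Pr :=
    fun K k => (integrable_const (1:ℝ)).indicator (hEmeas K k)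
  have hind_int2 : ∀ K k k', Integrable ((E K k ∩ E K k').indicator (1 : Ω → ℝ)) Pr :=
    fun K k k' => (integrable_const (1:ℝ)).indicator ((hEmeas K k).inter (hEmeas K k'))
  have hNint : ∀ K, Integrable (fun ω => ∑ k ∈ Finset.range K,
      (E K k).indicator (1 : Ω → ℝ) ω) Pr :=
    fun K => integrable_finset_sum _ fun k _ => hind_int K k
  have hNmeas : ∀ K, Measurable (fun ω => ∑ k ∈ Finset.range K,
      (E K k).indicator (1 : Ω → ℝ) ω) :=
    fun K => Finset.measurable_sum _ fun k _ => measurable_const.indicator (hEmeas K k)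
  have hNnonneg : ∀ K ω, 0 ≤ ∑ k ∈ Finset.range K, (E K k).indicator (1 : Ω → ℝ) ω :=
    fun K ω => Finset.sum_nonneg fun k _ => Set.indicator_nonneg (fun _ _ => zero_le_one) ω
  have hm_eq : ∀ K : ℕ,
      (∫ ω, (∑ k ∈ Finset.range K,
        if U K k ω ∈ Pint (fun j' => α j' + Z K ω j') j \ Pint α j then (1:ℝ) else 0)
          / Real.sqrt K ∂Pr)
      = (∑ k ∈ Finset.range K, (Pr (E K k)).toReal) / Real.sqrt K := by
    intro K
    have h0 := hfun_eq K
    calc (∫ ω, (∑ k ∈ Finset.range K,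
        if U K k ω ∈ Pint (fun j' => α j' + Z K ω j') j \ Pint α j then (1:ℝ) else 0)
          / Real.sqrt K ∂Pr)
        = ∫ ω, (∑ k ∈ Finset.range K, (E K k).indicator (1 : Ω → ℝ) ω) / Real.sqrt K ∂Pr := by
          rw [h0]
      _ = (∫ ω, ∑ k ∈ Finset.range K, (E K k).indicator (1 : Ω → ℝ) ω ∂Pr) / Real.sqrt K :=
          integral_div _ _
      _ = (∑ k ∈ Finset.range K, (Pr (E K k)).toReal) / Real.sqrt K := by
          rw [integral_finset_sum _ (fun k _ => hind_int K k)]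
          congr 1
          exact Finset.sum_congr rfl fun k _ => integral_indicator_one (hEmeas K k)
  have hSnonneg : ∀ K ω, 0 ≤ (∑ k ∈ Finset.range K,
      if U K k ω ∈ Pint (fun j' => α j' + Z K ω j') j \ Pint α j then (1:ℝ) else 0)
        / Real.sqrt K := by
    intro K ω
    apply div_nonneg _ (Real.sqrt_nonneg _)
    apply Finset.sum_nonneg
    intro k _
    rw [hite K k ω]
    exact Set.indicator_nonneg (fun _ _ => zero_le_one) ω
  have hmean_nonneg : ∀ K : ℕ, 0 ≤ ∫ ω, (∑ k ∈ Finset.range K,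
      if U K k ω ∈ Pint (fun j' => α j' + Z K ω j') j \ Pint α j then (1:ℝ) else 0)
        / Real.sqrt K ∂Pr :=
    fun K => integral_nonneg (hSnonneg K)
  -- mean bound for K ≥ 1
  have hmean_le : ∀ K : ℕ, 1 ≤ K →
      (∫ ω, (∑ k ∈ Finset.range K,
        if U K k ω ∈ Pint (fun j' => α j' + Z K ω j') j \ Pint α j then (1:ℝ) else 0)
          / Real.sqrt K ∂Pr)
      ≤ 2 * Real.sqrt J * Real.sqrt ((K:ℝ) * e K) := by
    intro K hK
    have hKpos : (0:ℝ) < (K:ℝ) := by exact_mod_cast Nat.lt_of_lt_of_le Nat.zero_lt_one hK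
    have hsqKpos : 0 < Real.sqrt K := Real.sqrt_pos.mpr hKpos
    rw [hm_eq K]
    have hsum_le : (∑ k ∈ Finset.range K, (Pr (E K k)).toReal) ≤ (K:ℝ) * b1 K := by
      calc (∑ k ∈ Finset.range K, (Pr (E K k)).toReal)
          ≤ ∑ _k ∈ Finset.range K, b1 K :=
            Finset.sum_le_sum fun k _ =>
              ENNReal.toReal_le_of_le_ofReal (hb1_nonneg K) (hb1 K k)
        _ = (K:ℝ) * b1 K := by rw [Finset.sum_const, Finset.card_range, nsmul_eq_mul]
    calc (∑ k ∈ Finset.range K, (Pr (E K k)).toReal) / Real.sqrt K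
        ≤ ((K:ℝ) * b1 K) / Real.sqrt K := by gcongr
      _ = Real.sqrt K * b1 K := by
          rw [eq_comm, eq_div_iff (ne_of_gt hsqKpos)]
          linear_combination (b1 K) * (Real.mul_self_sqrt hKpos.le)
      _ ≤ Real.sqrt K * (2 * Real.sqrt J * Real.sqrt (e K)) :=
          mul_le_mul_of_nonneg_left (hb1_le K) (Real.sqrt_nonneg _)
      _ = 2 * Real.sqrt J * (Real.sqrt K * Real.sqrt (e K)) := by ring
      _ = 2 * Real.sqrt J * Real.sqrt ((K:ℝ) * e K) := by
          rw [← Real.sqrt_mul hKpos.le]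
  -- second moment bound for K ≥ 1
  have hNsq_eq : ∀ K ω, (∑ k ∈ Finset.range K, (E K k).indicator (1 : Ω → ℝ) ω)^2
      = ∑ k ∈ Finset.range K, ∑ k' ∈ Finset.range K,
          (E K k ∩ E K k').indicator (1 : Ω → ℝ) ω := by
    intro K ω
    rw [sq, Finset.sum_mul_sum]
    refine Finset.sum_congr rfl fun k _ => Finset.sum_congr rfl fun k' _ => ?_
    exact (congrFun Set.inter_indicator_one ω).symm
  have hsq_int : ∀ K, ∫ ω, (∑ k ∈ Finset.range K, (E K k).indicator (1 : Ω → ℝ) ω)^2 ∂Pr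
      = ∑ k ∈ Finset.range K, ∑ k' ∈ Finset.range K, (Pr (E K k ∩ E K k')).toReal := by
    intro K
    have h0 : ∫ ω, (∑ k ∈ Finset.range K, (E K k).indicator (1 : Ω → ℝ) ω)^2 ∂Pr
        = ∫ ω, ∑ k ∈ Finset.range K, ∑ k' ∈ Finset.range K,
            (E K k ∩ E K k').indicator (1 : Ω → ℝ) ω ∂Pr :=
      integral_congr_ae (ae_of_all _ fun ω => hNsq_eq K ω)
    rw [h0, integral_finset_sum _ (fun k _ => integrable_finset_sum _ fun k' _ =>
      hind_int2 K k k')]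
    refine Finset.sum_congr rfl fun k _ => ?_
    rw [integral_finset_sum _ (fun k' _ => hind_int2 K k k')]
    exact Finset.sum_congr rfl fun k' _ =>
      integral_indicator_one ((hEmeas K k).inter (hEmeas K k'))
  have hsq_le : ∀ K : ℕ, 1 ≤ K →
      (∫ ω, ((∑ k ∈ Finset.range K, (E K k).indicator (1 : Ω → ℝ) ω) / Real.sqrt K)^2 ∂Pr)
      ≤ 2 * Real.sqrt J * Real.sqrt ((K:ℝ) * e K) + 4 * (J:ℝ) * ((K:ℝ) * e K) := by
    intro K hK
    have hKpos : (0:ℝ) < (K:ℝ) := by exact_mod_cast Nat.lt_of_lt_of_le Nat.zero_lt_one hK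
    have h0 : (∫ ω, ((∑ k ∈ Finset.range K, (E K k).indicator (1 : Ω → ℝ) ω)
        / Real.sqrt K)^2 ∂Pr)
        = (∫ ω, (∑ k ∈ Finset.range K, (E K k).indicator (1 : Ω → ℝ) ω)^2 ∂Pr) / (K:ℝ) := by
      have h1 : ∀ ω, ((∑ k ∈ Finset.range K, (E K k).indicator (1 : Ω → ℝ) ω)
          / Real.sqrt K)^2
          = (∑ k ∈ Finset.range K, (E K k).indicator (1 : Ω → ℝ) ω)^2 / (K:ℝ) := by
        intro ω; rw [div_pow, Real.sq_sqrt (Nat.cast_nonneg K)]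
      rw [integral_congr_ae (ae_of_all _ h1), integral_div]
    rw [h0, hsq_int K]
    have hterm : ∀ k ∈ Finset.range K, ∀ k' ∈ Finset.range K,
        (Pr (E K k ∩ E K k')).toReal ≤ (if k' = k then b1 K else b2 K) := by
      intro k _ k' _
      by_cases h : k' = k
      · rw [if_pos h, h, Set.inter_self]
        exact ENNReal.toReal_le_of_le_ofReal (hb1_nonneg K) (hb1 K k)
      · rw [if_neg h]
        exact ENNReal.toReal_le_of_le_ofReal (hb2_nonneg K)
          (hb2v K k k' fun hh => h hh.symm)
    have hrow : ∀ k ∈ Finset.range K,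
        (∑ k' ∈ Finset.range K, (if k' = k then b1 K else b2 K)) ≤ b1 K + (K:ℝ) * b2 K := by
      intro k hk
      have h1 : (∑ k' ∈ Finset.range K, (if k' = k then b1 K else b2 K))
          = ∑ k' ∈ Finset.range K, ((if k' = k then b1 K - b2 K else 0) + b2 K) :=
        Finset.sum_congr rfl fun k' _ => by split_ifs <;> ring
      rw [h1, Finset.sum_add_distrib, Finset.sum_ite_eq' (Finset.range K) k
        (fun _ => b1 K - b2 K), if_pos hk, Finset.sum_const, Finset.card_range, nsmul_eq_mul]
      linarith [hb2_nonneg K]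
    have htot : (∑ k ∈ Finset.range K, ∑ k' ∈ Finset.range K,
        (Pr (E K k ∩ E K k')).toReal) ≤ (K:ℝ) * (b1 K + (K:ℝ) * b2 K) := by
      calc (∑ k ∈ Finset.range K, ∑ k' ∈ Finset.range K, (Pr (E K k ∩ E K k')).toReal)
          ≤ ∑ k ∈ Finset.range K, (b1 K + (K:ℝ) * b2 K) := by
            refine Finset.sum_le_sum fun k hk => ?_
            exact le_trans (Finset.sum_le_sum (hterm k hk)) (hrow k hk)
        _ = (K:ℝ) * (b1 K + (K:ℝ) * b2 K) := by
            rw [Finset.sum_const, Finset.card_range, nsmul_eq_mul]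
    calc (∑ k ∈ Finset.range K, ∑ k' ∈ Finset.range K,
          (Pr (E K k ∩ E K k')).toReal) / (K:ℝ)
        ≤ ((K:ℝ) * (b1 K + (K:ℝ) * b2 K)) / (K:ℝ) := by gcongr
      _ = b1 K + (K:ℝ) * b2 K := mul_div_cancel_left₀ _ (ne_of_gt hKpos)
      _ ≤ 2 * Real.sqrt J * Real.sqrt ((K:ℝ) * e K) + 4 * (J:ℝ) * ((K:ℝ) * e K) := by
          have h2 : b1 K ≤ 2 * Real.sqrt J * Real.sqrt ((K:ℝ) * e K) := by
            refine le_trans (hb1_le K) ?_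
            have : Real.sqrt (e K) ≤ Real.sqrt ((K:ℝ) * e K) := by
              apply Real.sqrt_le_sqrt
              have hK1 : (1:ℝ) ≤ (K:ℝ) := by exact_mod_cast hK
              nlinarith [he_nonneg K]
            nlinarith [Real.sqrt_nonneg (J:ℝ)]
          have h3 : (K:ℝ) * b2 K = 4 * (J:ℝ) * ((K:ℝ) * e K) := by
            rw [hb2_eq K]; ring
          linarith
  -- limits
  have hee : Tendsto (fun K : ℕ => (K:ℝ) * e K) atTop (𝓝 0) := hZlim
  have hsqrt_t : Tendsto (fun K : ℕ => 2 * Real.sqrt J * Real.sqrt ((K:ℝ) * e K))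
      atTop (𝓝 0) := by
    have h1 : Tendsto (fun K : ℕ => Real.sqrt ((K:ℝ) * e K)) atTop (𝓝 0) := by
      have h0 : Tendsto (fun K : ℕ => Real.sqrt ((K:ℝ) * e K)) atTop (𝓝 (Real.sqrt 0)) :=
        (Real.continuous_sqrt.tendsto 0).comp hee
      rwa [Real.sqrt_zero] at h0
    simpa using h1.const_mul (2 * Real.sqrt J)
  have hγ : Tendsto (fun K : ℕ =>
      2 * Real.sqrt J * Real.sqrt ((K:ℝ) * e K) + 4 * (J:ℝ) * ((K:ℝ) * e K))
      atTop (𝓝 0) := by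
    simpa using hsqrt_t.add (hee.const_mul (4 * (J:ℝ)))
  -- part 1
  have hmean_tendsto : Tendsto (fun K : ℕ =>
      ∫ ω, (∑ k ∈ Finset.range K,
        if U K k ω ∈ Pint (fun j' => α j' + Z K ω j') j \ Pint α j then (1:ℝ) else 0)
          / Real.sqrt K ∂Pr) atTop (𝓝 0) := by
    refine tendsto_of_tendsto_of_tendsto_of_le_of_le' tendsto_const_nhds hsqrt_t
      (Eventually.of_forall fun K => hmean_nonneg K) ?_
    filter_upwards [eventually_ge_atTop 1] with K hK
    exact hmean_le K hK
  -- part 2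
  have hvar_tendsto : Tendsto (fun K : ℕ =>
      variance (fun ω => (∑ k ∈ Finset.range K,
        if U K k ω ∈ Pint (fun j' => α j' + Z K ω j') j \ Pint α j then (1:ℝ) else 0)
          / Real.sqrt K) Pr) atTop (𝓝 0) := by
    refine tendsto_of_tendsto_of_tendsto_of_le_of_le' tendsto_const_nhds hγ
      (Eventually.of_forall fun K => variance_nonneg _ _) ?_
    filter_upwards [eventually_ge_atTop 1] with K hK
    have hasm : AEStronglyMeasurable (fun ω => (∑ k ∈ Finset.range K,
        if U K k ω ∈ Pint (fun j' => α j' + Z K ω j') j \ Pint α j then (1:ℝ) else 0)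
          / Real.sqrt K) Pr := by
      rw [hfun_eq K]
      exact ((hNmeas K).div_const _).aestronglyMeasurable
    have h1 := variance_le_expectation_sq (μ := Pr) hasm
    refine le_trans h1 ?_
    have h2 : Pr[(fun ω => (∑ k ∈ Finset.range K,
        if U K k ω ∈ Pint (fun j' => α j' + Z K ω j') j \ Pint α j then (1:ℝ) else 0)
          / Real.sqrt K) ^ 2]
        = ∫ ω, ((∑ k ∈ Finset.range K, (E K k).indicator (1 : Ω → ℝ) ω) / Real.sqrt K)^2 ∂Pr := by
      rw [hfun_eq K]
      rfl
    rw [h2]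
    exact hsq_le K hK
  -- part 3
  have hprob : TendstoInMeasure Pr
      (fun K ω => (∑ k ∈ Finset.range K,
          if U K k ω ∈ Pint (fun j' => α j' + Z K ω j') j \ Pint α j then (1:ℝ) else 0)
            / Real.sqrt K) atTop (fun _ => 0) := by
    rw [tendstoInMeasure_iff_dist]
    intro ε hε
    have hSint : ∀ K, Integrable (fun ω => (∑ k ∈ Finset.range K,
        if U K k ω ∈ Pint (fun j' => α j' + Z K ω j') j \ Pint α j then (1:ℝ) else 0)
          / Real.sqrt K) Pr := by
      intro K
      rw [hfun_eq K]
      exact (hNint K).div_const _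
    have hup : Tendsto (fun K : ℕ => ENNReal.ofReal ((∫ ω, (∑ k ∈ Finset.range K,
        if U K k ω ∈ Pint (fun j' => α j' + Z K ω j') j \ Pint α j then (1:ℝ) else 0)
          / Real.sqrt K ∂Pr) / ε)) atTop (𝓝 0) := by
      have h1 := hmean_tendsto.div_const ε
      rw [zero_div] at h1
      have h2 := ENNReal.tendsto_ofReal h1
      simpa using h2
    refine tendsto_of_tendsto_of_tendsto_of_le_of_le' tendsto_const_nhds hup
      (Eventually.of_forall fun K => zero_le) (Eventually.of_forall fun K => ?_)
    have hsetK : {ω | ε ≤ dist ((∑ k ∈ Finset.range K,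
        if U K k ω ∈ Pint (fun j' => α j' + Z K ω j') j \ Pint α j then (1:ℝ) else 0)
          / Real.sqrt K) ((fun _ => (0:ℝ)) ω)}
        = {ω | ε ≤ (∑ k ∈ Finset.range K,
          if U K k ω ∈ Pint (fun j' => α j' + Z K ω j') j \ Pint α j then (1:ℝ) else 0)
            / Real.sqrt K} := by
      ext ω
      simp only [Set.mem_setOf_eq, dist_zero_right, Real.norm_eq_abs,
        abs_of_nonneg (hSnonneg K ω)]
    rw [hsetK]
    have hmar := mul_meas_ge_le_integral_of_nonneg
      (ae_of_all Pr (hSnonneg K)) (hSint K) ε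
    have htr : (Pr {ω | ε ≤ (∑ k ∈ Finset.range K,
        if U K k ω ∈ Pint (fun j' => α j' + Z K ω j') j \ Pint α j then (1:ℝ) else 0)
          / Real.sqrt K}).toReal
        ≤ (∫ ω, (∑ k ∈ Finset.range K,
          if U K k ω ∈ Pint (fun j' => α j' + Z K ω j') j \ Pint α j then (1:ℝ) else 0)
            / Real.sqrt K ∂Pr) / ε := by
      rw [le_div_iff₀ hε]
      rw [measureReal_def] at hmar
      linarith [hmar]
    calc Pr {ω | ε ≤ (∑ k ∈ Finset.range K,
          if U K k ω ∈ Pint (fun j' => α j' + Z K ω j') j \ Pint α j then (1:ℝ) else 0)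
            / Real.sqrt K}
        = ENNReal.ofReal ((Pr {ω | ε ≤ (∑ k ∈ Finset.range K,
          if U K k ω ∈ Pint (fun j' => α j' + Z K ω j') j \ Pint α j then (1:ℝ) else 0)
            / Real.sqrt K}).toReal) := (ENNReal.ofReal_toReal (measure_ne_top Pr _)).symm
      _ ≤ ENNReal.ofReal ((∫ ω, (∑ k ∈ Finset.range K,
          if U K k ω ∈ Pint (fun j' => α j' + Z K ω j') j \ Pint α j then (1:ℝ) else 0)
            / Real.sqrt K ∂Pr) / ε) := ENNReal.ofReal_le_ofReal htr
  exact ⟨hmean_tendsto, hvar_tendsto, hprob⟩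

end
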